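/- Assume the products are indexed so that v_1 ≥ v_2 ≥ … ≥ v_n > 0, and for T ∈ ℕ write E_T(M(S)) for the expected maximum load of assortment S with T customers. Then there exists a threshold T̄ ∈ ℕ such that for every T ≥ T̄, E_T(M({1})) = max_{S ⊆ {1,…,n}} E_T(M(S)); that is, offering only the single heaviest product is optimal for the static maximum load assortment problem whenever the number of customers is sufficiently large. -/

import Mathlib

open Finset

/-- MNL choice probability of product `i` when assortment `S` is offered. -/
noncomputable def phi {n : ℕ} (v : Fin n → ℝ) (S : Finset (Fin n)) (i : Fin n) : ℝ :=
  v i / (1 + ∑ j ∈ S, v j)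

/-- MNL no-purchase probability when assortment `S` is offered. -/
noncomputable def phi0 {n : ℕ} (v : Fin n → ℝ) (S : Finset (Fin n)) : ℝ :=
  1 / (1 + ∑ j ∈ S, v j)

/-- Probability of a single customer's choice when assortment `S` is offered:
`some i` (select product `i ∈ S`) has probability `φ_i(S)`, products outside `S`
are never selected, and `none` (no purchase) has probability `φ_0(S)`. -/
noncomputable def chooseProb {n : ℕ} (v : Fin n → ℝ) (S : Finset (Fin n)) :
    Option (Fin n) → ℝ
  | none => phi0 v S
  | some i => if i ∈ S then phi v S i else 0

/-- `staticEM T v S` is the expected maximum load `E(M(S))` when assortment `S` is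
statically offered to `T` customers making independent MNL choices:
`M(S) = max_{i ∈ S} L_i(S)` where `L_i(S)` counts the customers selecting `i`. -/
noncomputable def staticEM {n : ℕ} (T : ℕ) (v : Fin n → ℝ) (S : Finset (Fin n)) : ℝ :=
  ∑ f : Fin T → Option (Fin n),
    (∏ t, chooseProb v S (f t)) *
      ((S.sup fun i => (Finset.univ.filter fun t => f t = some i).card : ℕ) : ℝ)

section AuxA
variable {n : ℕ} {v : Fin n → ℝ}

lemma denom_pos (hv : ∀ i, 0 < v i) (S : Finset (Fin n)) : 0 < 1 + ∑ j ∈ S, v j := by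
  have : (0:ℝ) ≤ ∑ j ∈ S, v j := Finset.sum_nonneg fun j _ => (hv j).le
  linarith

lemma chooseProb_nonneg (hv : ∀ i, 0 < v i) (S : Finset (Fin n)) (a : Option (Fin n)) : 0 ≤ chooseProb v S a := by
  cases a with
  | none => exact div_nonneg one_pos.le (denom_pos hv S).le
  | some i =>
      simp only [chooseProb]
      split
      · exact div_nonneg (hv i).le (denom_pos hv S).le
      · exact le_refl 0

lemma chooseProb_sum (hv : ∀ i, 0 < v i) (S : Finset (Fin n)) : ∑ a : Option (Fin n), chooseProb v S a = 1 := by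
  rw [Fintype.sum_option]
  have hD := (denom_pos hv S).ne'
  simp only [chooseProb]
  rw [Finset.sum_ite_mem, Finset.univ_inter]
  unfold phi0 phi
  rw [← Finset.sum_div]
  field_simp

lemma sum_prod_eq {T : ℕ} (c : Fin T → Option (Fin n) → ℝ) :
    ∑ f : Fin T → Option (Fin n), ∏ s, c s (f s) = ∏ s, ∑ a, c s a := by
  rw [Finset.prod_univ_sum, Fintype.piFinset_univ]

lemma w_sum_one (hv : ∀ i, 0 < v i) (S : Finset (Fin n)) {T : ℕ} :
    ∑ f : Fin T → Option (Fin n), (∏ s, chooseProb v S (f s)) = 1 := by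
  rw [sum_prod_eq, Finset.prod_congr rfl fun s _ => chooseProb_sum hv S]
  simp

end AuxA

section AuxB
variable {n : ℕ} {v : Fin n → ℝ}

lemma expect_coord (hv : ∀ i, 0 < v i) (S : Finset (Fin n)) {T : ℕ} (t : Fin T)
    (g : Option (Fin n) → ℝ) :
    ∑ f : Fin T → Option (Fin n), (∏ s, chooseProb v S (f s)) * g (f t)
      = ∑ a, chooseProb v S a * g a := by
  have key : ∀ f : Fin T → Option (Fin n),
      (∏ s, chooseProb v S (f s)) * g (f t)
        = ∏ s, (if s = t then chooseProb v S (f s) * g (f s)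
            else chooseProb v S (f s)) := by
    intro f
    rw [← Finset.prod_erase_mul univ (fun s => chooseProb v S (f s)) (mem_univ t),
        ← Finset.prod_erase_mul univ (fun s => if s = t then chooseProb v S (f s) * g (f s)
            else chooseProb v S (f s)) (mem_univ t)]
    rw [if_pos rfl,
        Finset.prod_congr rfl fun s hs => if_neg (Finset.ne_of_mem_erase hs)]
    ring
  rw [Finset.sum_congr rfl fun f _ => key f,
      sum_prod_eq (fun s a => if s = t then chooseProb v S a * g a else chooseProb v S a)]
  have h2 : ∀ s : Fin T,
      (∑ a, (if s = t then chooseProb v S a * g a else chooseProb v S a))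
        = if s = t then (∑ a, chooseProb v S a * g a) else 1 := by
    intro s
    by_cases hs : s = t
    · simp [hs]
    · simp only [if_neg hs]
      exact chooseProb_sum hv S
  rw [Finset.prod_congr rfl fun s _ => h2 s,
      Finset.prod_ite_eq' univ t (fun _ => ∑ a, chooseProb v S a * g a)]
  simp

lemma expect_coord2 (hv : ∀ i, 0 < v i) (S : Finset (Fin n)) {T : ℕ} {t u : Fin T}
    (htu : t ≠ u) (g g' : Option (Fin n) → ℝ) :
    ∑ f : Fin T → Option (Fin n), (∏ s, chooseProb v S (f s)) * (g (f t) * g' (f u))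
      = (∑ a, chooseProb v S a * g a) * (∑ a, chooseProb v S a * g' a) := by
  have hu' : u ∈ univ.erase t := Finset.mem_erase.2 ⟨htu.symm, mem_univ u⟩
  have key : ∀ f : Fin T → Option (Fin n),
      (∏ s, chooseProb v S (f s)) * (g (f t) * g' (f u))
        = ∏ s, (if s = t then chooseProb v S (f s) * g (f s)
            else if s = u then chooseProb v S (f s) * g' (f s)
            else chooseProb v S (f s)) := by
    intro f
    rw [← Finset.prod_erase_mul univ (fun s => chooseProb v S (f s)) (mem_univ t),
        ← Finset.prod_erase_mul univ (fun s => if s = t then chooseProb v S (f s) * g (f s)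
            else if s = u then chooseProb v S (f s) * g' (f s)
            else chooseProb v S (f s)) (mem_univ t),
        ← Finset.prod_erase_mul (univ.erase t) (fun s => chooseProb v S (f s)) hu',
        ← Finset.prod_erase_mul (univ.erase t) (fun s => if s = t then chooseProb v S (f s) * g (f s)
            else if s = u then chooseProb v S (f s) * g' (f s)
            else chooseProb v S (f s)) hu']
    rw [if_pos rfl, if_neg htu.symm, if_pos rfl]
    have hrest : (∏ s ∈ (univ.erase t).erase u,
        (if s = t then chooseProb v S (f s) * g (f s)
          else if s = u then chooseProb v S (f s) * g' (f s)
          else chooseProb v S (f s)))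
        = ∏ s ∈ (univ.erase t).erase u, chooseProb v S (f s) :=
      Finset.prod_congr rfl (fun s hs => by
        rw [if_neg (Finset.ne_of_mem_erase (Finset.mem_of_mem_erase hs)),
            if_neg (Finset.ne_of_mem_erase hs)])
    rw [hrest]
    ring
  rw [Finset.sum_congr rfl fun f _ => key f,
      sum_prod_eq (fun s a => if s = t then chooseProb v S a * g a
        else if s = u then chooseProb v S a * g' a else chooseProb v S a)]
  have h2 : ∀ s : Fin T,
      (∑ a, (if s = t then chooseProb v S a * g a
          else if s = u then chooseProb v S a * g' a
          else chooseProb v S a))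
        = if s = t then (∑ a, chooseProb v S a * g a)
          else if s = u then (∑ a, chooseProb v S a * g' a) else 1 := by
    intro s
    by_cases hs : s = t
    · simp [hs]
    · by_cases hs' : s = u
      · simp [hs, hs']
      · simp only [if_neg hs, if_neg hs']
        exact chooseProb_sum hv S
  rw [Finset.prod_congr rfl fun s _ => h2 s,
      ← Finset.prod_erase_mul univ (fun s => if s = t then (∑ a, chooseProb v S a * g a)
          else if s = u then (∑ a, chooseProb v S a * g' a) else 1) (mem_univ t),
      ← Finset.prod_erase_mul (univ.erase t) (fun s => if s = t then (∑ a, chooseProb v S a * g a)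
          else if s = u then (∑ a, chooseProb v S a * g' a) else 1) hu']
  rw [if_pos rfl, if_neg htu.symm, if_pos rfl]
  have hrest : (∏ s ∈ (univ.erase t).erase u,
      (if s = t then (∑ a, chooseProb v S a * g a)
        else if s = u then (∑ a, chooseProb v S a * g' a) else 1)) = 1 := by
    rw [Finset.prod_congr rfl (fun s hs => by
      rw [if_neg (Finset.ne_of_mem_erase (Finset.mem_of_mem_erase hs)),
          if_neg (Finset.ne_of_mem_erase hs)] : ∀ s ∈ (univ.erase t).erase u,
        (if s = t then (∑ a, chooseProb v S a * g a)
          else if s = u then (∑ a, chooseProb v S a * g' a) else 1) = 1)]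
    exact Finset.prod_const_one
  rw [hrest]
  ring

end AuxB

section AuxC
variable {n : ℕ} {v : Fin n → ℝ}

lemma chooseProb_le_one (hv : ∀ i, 0 < v i) (S : Finset (Fin n)) (a : Option (Fin n)) :
    chooseProb v S a ≤ 1 := by
  have h := Finset.single_le_sum (f := chooseProb v S)
    (fun b _ => chooseProb_nonneg hv S b) (mem_univ a)
  rwa [chooseProb_sum hv S] at h

lemma sum_ind (hv : ∀ i, 0 < v i) (S : Finset (Fin n)) (i : Fin n) :
    ∑ a, chooseProb v S a * (if a = some i then (1:ℝ) else 0)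
      = chooseProb v S (some i) := by
  simp [mul_ite, Finset.sum_ite_eq']

lemma load_eq {n : ℕ} {T : ℕ} (f : Fin T → Option (Fin n)) (i : Fin n) :
    ((univ.filter fun t => f t = some i).card : ℝ)
      = ∑ t, (if f t = some i then (1:ℝ) else 0) := by
  rw [Finset.sum_boole]

lemma expect_load (hv : ∀ i, 0 < v i) (S : Finset (Fin n)) {T : ℕ} (i : Fin n) :
    ∑ f : Fin T → Option (Fin n), (∏ s, chooseProb v S (f s)) *
        ((univ.filter fun t => f t = some i).card : ℝ)
      = T * chooseProb v S (some i) := by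
  have h1 : ∀ f : Fin T → Option (Fin n),
      (∏ s, chooseProb v S (f s)) * ((univ.filter fun t => f t = some i).card : ℝ)
      = ∑ t, (∏ s, chooseProb v S (f s)) * (if f t = some i then (1:ℝ) else 0) := by
    intro f
    rw [load_eq f i, Finset.mul_sum]
  rw [Finset.sum_congr rfl fun f _ => h1 f, Finset.sum_comm]
  have h2 : ∀ t : Fin T,
      ∑ f : Fin T → Option (Fin n),
        (∏ s, chooseProb v S (f s)) * (if f t = some i then (1:ℝ) else 0)
      = chooseProb v S (some i) := by
    intro t
    rw [expect_coord hv S t (fun a => if a = some i then (1:ℝ) else 0)]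
    exact sum_ind hv S i
  rw [Finset.sum_congr rfl fun t _ => h2 t]
  simp [mul_comm]

lemma expect_load_sq (hv : ∀ i, 0 < v i) (S : Finset (Fin n)) {T : ℕ} (i : Fin n) :
    ∑ f : Fin T → Option (Fin n), (∏ s, chooseProb v S (f s)) *
        ((univ.filter fun t => f t = some i).card : ℝ)^2
      = T * chooseProb v S (some i)
        + ((T:ℝ)^2 - T) * chooseProb v S (some i)^2 := by
  set q := chooseProb v S (some i) with hq
  have h1 : ∀ f : Fin T → Option (Fin n),
      (∏ s, chooseProb v S (f s)) * ((univ.filter fun t => f t = some i).card : ℝ)^2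
      = ∑ t, ∑ u, (∏ s, chooseProb v S (f s)) *
          ((if f t = some i then (1:ℝ) else 0) * (if f u = some i then (1:ℝ) else 0)) := by
    intro f
    rw [load_eq f i, sq, Finset.sum_mul_sum]
    rw [Finset.mul_sum]
    exact Finset.sum_congr rfl fun t _ => by rw [Finset.mul_sum]
  rw [Finset.sum_congr rfl fun f _ => h1 f, Finset.sum_comm]
  have h2 : ∀ t : Fin T,
      ∑ f : Fin T → Option (Fin n), ∑ u, (∏ s, chooseProb v S (f s)) *
          ((if f t = some i then (1:ℝ) else 0) * (if f u = some i then (1:ℝ) else 0))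
      = ∑ u, if t = u then q else q^2 := by
    intro t
    rw [Finset.sum_comm]
    refine Finset.sum_congr rfl fun u _ => ?_
    by_cases htu : t = u
    · subst htu
      have hind : ∀ f : Fin T → Option (Fin n),
          (∏ s, chooseProb v S (f s)) *
            ((if f t = some i then (1:ℝ) else 0) * (if f t = some i then (1:ℝ) else 0))
          = (∏ s, chooseProb v S (f s)) * (if f t = some i then (1:ℝ) else 0) := by
        intro f
        by_cases h : f t = some i <;> simp [h]
      rw [Finset.sum_congr rfl fun f _ => hind f,
          expect_coord hv S t (fun a => if a = some i then (1:ℝ) else 0),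
          sum_ind hv S i, if_pos rfl]
    · rw [expect_coord2 hv S htu (fun a => if a = some i then (1:ℝ) else 0)
          (fun a => if a = some i then (1:ℝ) else 0),
          sum_ind hv S i, if_neg htu, ← hq, sq]
  rw [Finset.sum_congr rfl fun t _ => h2 t]
  have h3 : ∀ t : Fin T, (∑ u, if t = u then q else q^2) = q + ((T:ℝ) - 1) * q^2 := by
    intro t
    have : ∀ u : Fin T, (if t = u then q else q^2)
        = (if t = u then q - q^2 else 0) + q^2 := by
      intro u; by_cases h : t = u <;> simp [h]
    rw [Finset.sum_congr rfl fun u _ => this u, Finset.sum_add_distrib,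
        Finset.sum_ite_eq univ t (fun _ => q - q^2), if_pos (mem_univ t)]
    simp
    ring
  rw [Finset.sum_congr rfl fun t _ => h3 t]
  simp
  ring

end AuxC

section AuxD
variable {n : ℕ} {v : Fin n → ℝ}

lemma expect_dev_sq (hv : ∀ i, 0 < v i) (S : Finset (Fin n)) {T : ℕ} (i : Fin n) :
    ∑ f : Fin T → Option (Fin n), (∏ s, chooseProb v S (f s)) *
        (((univ.filter fun t => f t = some i).card : ℝ) - T * chooseProb v S (some i))^2
      = T * chooseProb v S (some i) - T * chooseProb v S (some i)^2 := by
  set q := chooseProb v S (some i) with hq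
  have e : ∀ f : Fin T → Option (Fin n),
      (∏ s, chooseProb v S (f s)) *
        (((univ.filter fun t => f t = some i).card : ℝ) - T * q)^2
      = ((∏ s, chooseProb v S (f s)) *
          ((univ.filter fun t => f t = some i).card : ℝ)^2
        - (2*(T:ℝ)*q) * ((∏ s, chooseProb v S (f s)) *
            ((univ.filter fun t => f t = some i).card : ℝ)))
        + ((T:ℝ)^2*q^2) * (∏ s, chooseProb v S (f s)) := by
    intro f; ring
  rw [Finset.sum_congr rfl fun f _ => e f, Finset.sum_add_distrib,
      Finset.sum_sub_distrib, ← Finset.mul_sum, ← Finset.mul_sum,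
      expect_load_sq hv S i, expect_load hv S i, w_sum_one hv S]
  ring

lemma expect_absdev_le (hv : ∀ i, 0 < v i) (S : Finset (Fin n)) {T : ℕ} (i : Fin n) :
    ∑ f : Fin T → Option (Fin n), (∏ s, chooseProb v S (f s)) *
        |((univ.filter fun t => f t = some i).card : ℝ) - T * chooseProb v S (some i)|
      ≤ Real.sqrt T := by
  set q := chooseProb v S (some i) with hq
  have hw : ∀ f : Fin T → Option (Fin n), 0 ≤ ∏ s, chooseProb v S (f s) :=
    fun f => Finset.prod_nonneg fun s _ => chooseProb_nonneg hv S (f s)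
  set d : (Fin T → Option (Fin n)) → ℝ :=
    fun f => ((univ.filter fun t => f t = some i).card : ℝ) - T * q with hd
  have hA0 : 0 ≤ ∑ f, (∏ s, chooseProb v S (f s)) * |d f| :=
    Finset.sum_nonneg fun f _ => mul_nonneg (hw f) (abs_nonneg _)
  have cs := Finset.sum_mul_sq_le_sq_mul_sq univ
    (fun f : Fin T → Option (Fin n) => Real.sqrt (∏ s, chooseProb v S (f s)))
    (fun f => Real.sqrt (∏ s, chooseProb v S (f s)) * |d f|)
  have e1 : ∀ f : Fin T → Option (Fin n),
      Real.sqrt (∏ s, chooseProb v S (f s)) *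
        (Real.sqrt (∏ s, chooseProb v S (f s)) * |d f|)
      = (∏ s, chooseProb v S (f s)) * |d f| := by
    intro f
    rw [← mul_assoc, Real.mul_self_sqrt (hw f)]
  have e2 : ∀ f : Fin T → Option (Fin n),
      (Real.sqrt (∏ s, chooseProb v S (f s)))^2 = ∏ s, chooseProb v S (f s) :=
    fun f => Real.sq_sqrt (hw f)
  have e3 : ∀ f : Fin T → Option (Fin n),
      (Real.sqrt (∏ s, chooseProb v S (f s)) * |d f|)^2
      = (∏ s, chooseProb v S (f s)) * (d f)^2 := by
    intro f
    rw [mul_pow, Real.sq_sqrt (hw f), sq_abs]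
  rw [Finset.sum_congr rfl fun f _ => e1 f, Finset.sum_congr rfl fun f _ => e2 f,
      Finset.sum_congr rfl fun f _ => e3 f, w_sum_one hv S, one_mul] at cs
  have hvar : ∑ f : Fin T → Option (Fin n), (∏ s, chooseProb v S (f s)) * (d f)^2
      = T * q - T * q^2 := expect_dev_sq hv S i
  rw [hvar] at cs
  have hq0 : 0 ≤ q := chooseProb_nonneg hv S (some i)
  have hq1 : q ≤ 1 := chooseProb_le_one hv S (some i)
  have hT0 : (0:ℝ) ≤ T := Nat.cast_nonneg T
  have hle : (∑ f, (∏ s, chooseProb v S (f s)) * |d f|)^2 ≤ (T:ℝ) := by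
    nlinarith
  exact (Real.le_sqrt hA0 hT0).2 hle

end AuxD

section AuxE
variable {n : ℕ} {v : Fin n → ℝ}

lemma staticEM_singleton (hv : ∀ i, 0 < v i) (i : Fin n) (T : ℕ) :
    staticEM T v {i} = T * (v i / (1 + v i)) := by
  unfold staticEM
  have hsup : ∀ f : Fin T → Option (Fin n),
      (({i} : Finset (Fin n)).sup fun j => (univ.filter fun t => f t = some j).card)
      = (univ.filter fun t => f t = some i).card := fun f => Finset.sup_singleton
  rw [Finset.sum_congr rfl fun f _ => by rw [hsup f]]
  rw [expect_load hv {i} i]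
  have : chooseProb v {i} (some i) = v i / (1 + v i) := by
    simp [chooseProb, phi]
  rw [this]

lemma staticEM_empty (T : ℕ) : staticEM T v ∅ = 0 := by
  simp [staticEM]

lemma staticEM_le (hv : ∀ i, 0 < v i) (S : Finset (Fin n)) (hS : S.Nonempty) (T : ℕ)
    (b : ℝ) (hb : ∀ i ∈ S, chooseProb v S (some i) ≤ b) :
    staticEM T v S ≤ T * b + S.card * Real.sqrt T := by
  have hw : ∀ f : Fin T → Option (Fin n), 0 ≤ ∏ s, chooseProb v S (f s) :=
    fun f => Finset.prod_nonneg fun s _ => chooseProb_nonneg hv S (f s)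
  have point : ∀ f : Fin T → Option (Fin n),
      ((S.sup fun i => (univ.filter fun t => f t = some i).card : ℕ) : ℝ)
      ≤ T * b + ∑ i ∈ S, |((univ.filter fun t => f t = some i).card : ℝ)
          - T * chooseProb v S (some i)| := by
    intro f
    obtain ⟨i, hi, hieq⟩ := Finset.exists_mem_eq_sup S hS
      (fun i => (univ.filter fun t => f t = some i).card)
    rw [hieq]
    have h1 : ((univ.filter fun t => f t = some i).card : ℝ)
        ≤ T * chooseProb v S (some i)
          + |((univ.filter fun t => f t = some i).card : ℝ)
              - T * chooseProb v S (some i)| := by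
      have := le_abs_self (((univ.filter fun t => f t = some i).card : ℝ)
        - T * chooseProb v S (some i))
      linarith
    have h2 : |((univ.filter fun t => f t = some i).card : ℝ)
          - T * chooseProb v S (some i)|
        ≤ ∑ j ∈ S, |((univ.filter fun t => f t = some j).card : ℝ)
            - T * chooseProb v S (some j)| :=
      Finset.single_le_sum (f := fun j => |((univ.filter fun t => f t = some j).card : ℝ)
        - T * chooseProb v S (some j)|) (fun j _ => abs_nonneg _) hi
    have h3 : (T:ℝ) * chooseProb v S (some i) ≤ T * b :=
      mul_le_mul_of_nonneg_left (hb i hi) (Nat.cast_nonneg T)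
    linarith
  have step1 : staticEM T v S
      ≤ ∑ f : Fin T → Option (Fin n), (∏ s, chooseProb v S (f s)) *
          (T * b + ∑ i ∈ S, |((univ.filter fun t => f t = some i).card : ℝ)
              - T * chooseProb v S (some i)|) := by
    unfold staticEM
    exact Finset.sum_le_sum fun f _ =>
      mul_le_mul_of_nonneg_left (point f) (hw f)
  have step2 : ∑ f : Fin T → Option (Fin n), (∏ s, chooseProb v S (f s)) *
          (T * b + ∑ i ∈ S, |((univ.filter fun t => f t = some i).card : ℝ)
              - T * chooseProb v S (some i)|)
      = T * b + ∑ i ∈ S, ∑ f : Fin T → Option (Fin n),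
          (∏ s, chooseProb v S (f s)) *
            |((univ.filter fun t => f t = some i).card : ℝ)
              - T * chooseProb v S (some i)| := by
    have e : ∀ f : Fin T → Option (Fin n),
        (∏ s, chooseProb v S (f s)) *
          (T * b + ∑ i ∈ S, |((univ.filter fun t => f t = some i).card : ℝ)
              - T * chooseProb v S (some i)|)
        = (T * b) * (∏ s, chooseProb v S (f s))
          + ∑ i ∈ S, (∏ s, chooseProb v S (f s)) *
              |((univ.filter fun t => f t = some i).card : ℝ)
                - T * chooseProb v S (some i)| := by
      intro f
      rw [mul_add, Finset.mul_sum,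
          mul_comm (∏ s, chooseProb v S (f s)) ((T:ℝ) * b)]
    rw [Finset.sum_congr rfl fun f _ => e f, Finset.sum_add_distrib,
        ← Finset.mul_sum, w_sum_one hv S, mul_one, Finset.sum_comm]
  have step3 : ∑ i ∈ S, ∑ f : Fin T → Option (Fin n),
          (∏ s, chooseProb v S (f s)) *
            |((univ.filter fun t => f t = some i).card : ℝ)
              - T * chooseProb v S (some i)|
      ≤ S.card * Real.sqrt T := by
    calc _ ≤ ∑ _i ∈ S, Real.sqrt T :=
          Finset.sum_le_sum fun i _ => expect_absdev_le hv S i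
      _ = S.card * Real.sqrt T := by rw [Finset.sum_const, nsmul_eq_mul]
  linarith [step1, step2 ▸ step1, step3]

end AuxE

/-- In the many-customers regime, offering only the single heaviest product is optimal:
there is a threshold `T̄` such that for every number of customers `T ≥ T̄`, the expected
maximum load of the singleton assortment consisting of the heaviest product equals the
maximum expected maximum load over all assortments. -/
theorem heaviest_product_optimal_for_large_T
    (n : ℕ) (hn : 0 < n) (v : Fin n → ℝ) (hv : ∀ i, 0 < v i)
    (hsorted : ∀ i j : Fin n, i ≤ j → v j ≤ v i) :
    ∃ Tbar : ℕ, ∀ T : ℕ, Tbar ≤ T →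
      staticEM T v {(⟨0, hn⟩ : Fin n)} =
        Finset.univ.powerset.sup' ⟨∅, Finset.empty_mem_powerset _⟩ (staticEM T v) := by
  set i0 : Fin n := ⟨0, hn⟩ with hi0
  have hi0le : ∀ i : Fin n, i0 ≤ i := fun i => Fin.mk_le_of_le_val (Nat.zero_le _)
  have hvle : ∀ i : Fin n, v i ≤ v i0 := fun i => hsorted i0 i (hi0le i)
  set ε : ℝ := Finset.univ.inf' ⟨i0, mem_univ i0⟩ v with hε
  have hεle : ∀ i : Fin n, ε ≤ v i := fun i => Finset.inf'_le v (mem_univ i)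
  have hεpos : 0 < ε := by
    rw [hε]
    exact (Finset.lt_inf'_iff (H := _)).2 fun i _ => hv i
  set p1 : ℝ := v i0 / (1 + v i0) with hp1
  set qstar : ℝ := v i0 / (1 + v i0 + ε) with hqstar
  have hd1 : (0:ℝ) < 1 + v i0 := by linarith [hv i0]
  have hd2 : (0:ℝ) < 1 + v i0 + ε := by linarith [hv i0]
  have hgap : qstar < p1 :=
    div_lt_div_of_pos_left (hv i0) hd1 (by linarith)
  set δ : ℝ := p1 - qstar with hδ
  have hδpos : 0 < δ := by simp [hδ]; linarith
  refine ⟨⌈((n:ℝ) / δ)^2⌉₊ + 1, fun T hT => ?_⟩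
  have hTR : ((n:ℝ) / δ)^2 ≤ (T:ℝ) := by
    calc ((n:ℝ) / δ)^2 ≤ (⌈((n:ℝ) / δ)^2⌉₊ : ℝ) := Nat.le_ceil _
      _ ≤ (T:ℝ) := by exact_mod_cast le_trans (Nat.le_succ _) hT
  have hsqrt : (n:ℝ) / δ ≤ Real.sqrt T := by
    calc (n:ℝ) / δ ≤ Real.sqrt (((n:ℝ) / δ)^2) := by
          rw [Real.sqrt_sq (div_nonneg (Nat.cast_nonneg n) hδpos.le)]
      _ ≤ Real.sqrt T := Real.sqrt_le_sqrt hTR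
  have hnδ : (n:ℝ) ≤ δ * Real.sqrt T := by
    rw [div_le_iff₀ hδpos] at hsqrt
    linarith
  have hnsqrt : (n:ℝ) * Real.sqrt T ≤ δ * (T:ℝ) := by
    have h0 : 0 ≤ Real.sqrt T := Real.sqrt_nonneg _
    calc (n:ℝ) * Real.sqrt T ≤ (δ * Real.sqrt T) * Real.sqrt T :=
          mul_le_mul_of_nonneg_right hnδ h0
      _ = δ * (T:ℝ) := by
          rw [mul_assoc, Real.mul_self_sqrt (Nat.cast_nonneg T)]
  -- the key bound for every assortment
  have key : ∀ S : Finset (Fin n), staticEM T v S ≤ T * p1 := by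
    intro S
    rcases Nat.lt_or_ge S.card 2 with hc | hc
    · interval_cases h : S.card
      · -- empty
        rw [Finset.card_eq_zero.1 h, staticEM_empty]
        have : 0 < p1 := div_pos (hv i0) hd1
        positivity
      · -- singleton
        obtain ⟨i, hi⟩ := Finset.card_eq_one.1 h
        rw [hi, staticEM_singleton hv i T]
        have hmono : v i / (1 + v i) ≤ p1 := by
          rw [hp1, div_le_div_iff₀ (by linarith [hv i]) hd1]
          nlinarith [hvle i, hv i, hv i0]
        exact mul_le_mul_of_nonneg_left hmono (Nat.cast_nonneg T)
    · -- at least two products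
      have hS : S.Nonempty := Finset.card_pos.1 (by omega)
      have hb : ∀ i ∈ S, chooseProb v S (some i) ≤ qstar := by
        intro i hi
        obtain ⟨j, hj, hji⟩ := Finset.exists_mem_ne (s := S) (by omega) i
        have hsub : ({i, j} : Finset (Fin n)) ⊆ S := by
          intro x hx
          rcases Finset.mem_insert.1 hx with h | h
          · exact h ▸ hi
          · exact (Finset.mem_singleton.1 h) ▸ hj
        have hpair : v i + v j ≤ ∑ k ∈ S, v k := by
          have := Finset.sum_le_sum_of_subset_of_nonneg hsub
            (fun k _ _ => (hv k).le)
          rwa [Finset.sum_pair (Ne.symm hji)] at this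
        have hvS : v i + ε ≤ ∑ k ∈ S, v k := by
          have := hεle j
          linarith
        have : chooseProb v S (some i) = v i / (1 + ∑ k ∈ S, v k) := by
          simp [chooseProb, phi, hi]
        rw [this, hqstar, div_le_div_iff₀ (denom_pos hv S) hd2]
        nlinarith [hvle i, hv i, hv i0, hεpos]
      calc staticEM T v S ≤ T * qstar + S.card * Real.sqrt T :=
            staticEM_le hv S hS T qstar hb
        _ ≤ T * qstar + n * Real.sqrt T := by
            have hcard : (S.card : ℝ) ≤ (n:ℝ) := by
              have := Finset.card_le_univ S
              simp only [Finset.card_univ, Fintype.card_fin] at this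
              exact_mod_cast this
            have := mul_le_mul_of_nonneg_right hcard (Real.sqrt_nonneg (T:ℝ))
            linarith
        _ ≤ T * qstar + δ * T := by linarith
        _ = T * p1 := by rw [hδ]; ring
  have hsingleton : staticEM T v {i0} = T * p1 := by
    rw [staticEM_singleton hv i0 T, hp1]
  apply le_antisymm
  · exact Finset.le_sup' (staticEM T v)
      (Finset.mem_powerset.2 (Finset.subset_univ _))
  · exact Finset.sup'_le _ _ fun S _ => by rw [hsingleton]; exact key S
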